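/- Let C be a binary linear code of length n in which every codeword has even Hamming weight, and for v ∈ F_2^n write D(v) = min_{c ∈ C} d_H(v, c). Let T be a natural number, let j : Fin T → Fin n be a sequence of indices, and let s₀, s₁, …, s_T ∈ F_2^n satisfy s_{t+1} = s_t ⊕ e_{j(t)} for all t < T. Suppose that for every t < T the flip increases the distance to all nearest codewords, i.e., min over {c ∈ C : d_H(s_t, c) = D(s_t)} of d_H(s_{t+1}, c) equals D(s_t) + 1. Then D(s_T) ≥ D(s₀) + T. -/

import Mathlib

lemma castNorm {n : ℕ} (u : Fin n → ZMod 2) : ((hammingNorm u : ZMod 2)) = ∑ i, u i := by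
  have h1 : ∀ x : ZMod 2, x ≠ 0 → x = 1 := by decide
  rw [hammingNorm, ← Finset.sum_filter_ne_zero Finset.univ]
  rw [Finset.sum_congr rfl (fun i hi => h1 _ (Finset.mem_filter.mp hi).2)]
  simp

lemma castDist {n : ℕ} (v u : Fin n → ZMod 2) :
    ((hammingDist v u : ZMod 2)) = (∑ i, v i) + ∑ i, u i := by
  have hnv : ∀ x y : ZMod 2, -x + y = x - y := by decide
  rw [hammingDist_eq_hammingNorm v u, show -v + u = v - u from funext fun i => hnv (v i) (u i), castNorm (v - u)]
  have h : ∀ x y : ZMod 2, x - y = x + y := by decide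
  simp only [Pi.sub_apply, h]
  rw [Finset.sum_add_distrib]

lemma normSingle {n : ℕ} (j : Fin n) : hammingNorm ((Pi.single j 1 : Fin n → ZMod 2)) = 1 := by
  unfold hammingNorm
  have h : (Finset.filter (fun i => (Pi.single j 1 : Fin n → ZMod 2) i ≠ 0) Finset.univ) = {j} := by
    ext i
    simp [Pi.single_apply]
  rw [h, Finset.card_singleton]

theorem local_search_increases_distance {n : ℕ}
    (C : Submodule (ZMod 2) (Fin n → ZMod 2))
    (heven : ∀ c ∈ C, Even (hammingNorm c))
    (D : (Fin n → ZMod 2) → ℕ)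
    (hD : ∀ v, D v = sInf {m | ∃ c ∈ C, hammingDist v c = m})
    (T : ℕ) (j : Fin T → Fin n)
    (s : ℕ → Fin n → ZMod 2)
    (hs : ∀ t : Fin T, s ((t : ℕ) + 1) = s (t : ℕ) + Pi.single (j t) 1)
    (hflip : ∀ t : Fin T,
      sInf {m | ∃ c, (c ∈ C ∧ hammingDist (s (t : ℕ)) c = D (s (t : ℕ))) ∧
          hammingDist (s ((t : ℕ) + 1)) c = m} = D (s (t : ℕ)) + 1) :
    D (s 0) + T ≤ D (s T) := by
  have hpar : ∀ v (c : Fin n → ZMod 2), c ∈ C →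
      ((hammingDist v c : ZMod 2)) = ∑ i, v i := by
    intro v c hc
    rw [castDist]
    have h0 : ((hammingNorm c : ZMod 2)) = 0 := by
      rw [ZMod.natCast_eq_zero_iff]
      exact (heven c hc).two_dvd
    rw [castNorm] at h0
    rw [h0, add_zero]
  have hattain : ∀ v, ∃ c ∈ C, hammingDist v c = D v := by
    intro v
    have hne : {m | ∃ c ∈ C, hammingDist v c = m}.Nonempty :=
      ⟨hammingDist v 0, 0, C.zero_mem, rfl⟩
    have h := Nat.sInf_mem hne
    rw [← hD v] at h
    exact h
  have hstep : ∀ t : Fin T, D (s (t : ℕ)) + 1 ≤ D (s ((t : ℕ) + 1)) := by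
    intro t
    have hdvv' : hammingDist (s (t : ℕ)) (s ((t : ℕ) + 1)) = 1 := by
      rw [hs t, hammingDist_eq_hammingNorm]
      have h : -s (t : ℕ) + (s (t : ℕ) + Pi.single (j t) 1) = Pi.single (j t) 1 := by
        funext i
        have : ∀ x y : ZMod 2, -x + (x + y) = y := by decide
        exact this _ _
      rw [h, normSingle]
    obtain ⟨cstar, hcstar, hdstar⟩ := hattain (s (t : ℕ))
    have hne' : {m | ∃ c, (c ∈ C ∧ hammingDist (s (t : ℕ)) c = D (s (t : ℕ))) ∧
        hammingDist (s ((t : ℕ) + 1)) c = m}.Nonempty :=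
      ⟨hammingDist (s ((t : ℕ) + 1)) cstar, cstar, ⟨hcstar, hdstar⟩, rfl⟩
    obtain ⟨c₀, ⟨hc₀C, hc₀d⟩, hc₀d'⟩ := Nat.sInf_mem hne'
    rw [hflip t] at hc₀d'
    obtain ⟨c₁, hc₁C, hc₁d⟩ := hattain (s ((t : ℕ) + 1))
    by_contra hcon
    push_neg at hcon
    have hsum' : (∑ i, s ((t : ℕ) + 1) i) = (∑ i, s (t : ℕ) i) + 1 := by
      rw [hs t]
      simp [Finset.sum_add_distrib, Finset.sum_pi_single]
    have hparm : ((D (s ((t : ℕ) + 1)) : ZMod 2)) = (D (s (t : ℕ)) : ZMod 2) + 1 := by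
      rw [← hc₁d, hpar _ c₁ hc₁C, hsum', ← hpar _ c₀ hc₀C, hc₀d]
    have hne : D (s ((t : ℕ) + 1)) ≠ D (s (t : ℕ)) := by
      intro h
      rw [h] at hparm
      exact one_ne_zero (left_eq_add.mp hparm)
    have hlt : D (s ((t : ℕ) + 1)) < D (s (t : ℕ)) := by omega
    have htri : hammingDist (s (t : ℕ)) c₁ ≤ 1 + D (s ((t : ℕ) + 1)) := by
      calc hammingDist (s (t : ℕ)) c₁
          ≤ hammingDist (s (t : ℕ)) (s ((t : ℕ) + 1)) + hammingDist (s ((t : ℕ) + 1)) c₁ :=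
            hammingDist_triangle _ _ _
        _ = 1 + D (s ((t : ℕ) + 1)) := by rw [hdvv', hc₁d]
    have hge : D (s (t : ℕ)) ≤ hammingDist (s (t : ℕ)) c₁ := by
      rw [hD (s (t : ℕ))]
      exact Nat.sInf_le ⟨c₁, hc₁C, rfl⟩
    have heq : hammingDist (s (t : ℕ)) c₁ = D (s (t : ℕ)) := by omega
    have hfin : D (s (t : ℕ)) + 1 ≤ D (s ((t : ℕ) + 1)) := by
      rw [← hflip t, ← hc₁d]
      exact Nat.sInf_le ⟨c₁, ⟨hc₁C, heq⟩, rfl⟩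
    omega
  have main : ∀ t, t ≤ T → D (s 0) + t ≤ D (s t) := by
    intro t
    induction t with
    | zero => intro _; simp
    | succ k ih =>
      intro hk
      have hkT : k < T := by omega
      have h1 := hstep ⟨k, hkT⟩
      have h2 := ih (le_of_lt hkT)
      simp only [Fin.val_mk] at h1
      omega
  exact main T le_rfl
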